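/- Let K be a field, let S = ⋃_{k≥1} {10^k·n + k − 1 : n ≥ 1} ⊆ ℕ, and let A = K⟨x_1, x_2, x_3⟩/I, where I is the two-sided ideal generated by all monomials that do not occur as a factor of any right-infinite word x_{ε_1} x_{ε_2} x_{ε_3} ⋯ with ε_i ∈ {1,2,3} for all i and ε_i = 1 if and only if i ∈ S. Then the two-sided ideal of A generated by x_2 and x_3 is locally nilpotent: every finitely generated non-unital K-subalgebra B contained in this ideal is nilpotent, i.e., there exists m ≥ 1 such that every product of m elements of B is zero. -/

import Mathlib

noncomputable section

namespace Paper

open Module Filter MulOpposite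

/-- The free associative unital `K`-algebra on a set `σ` of generators,
realized as the monoid algebra of the free monoid on `σ`. -/
abbrev FreeAlg (K : Type) [Field K] (σ : Type) : Type := MonoidAlgebra K (FreeMonoid σ)

/-- The monomial of the free algebra corresponding to a word `w`. -/
def wrd (K : Type) [Field K] {σ : Type} (w : List σ) : FreeAlg K σ :=
  MonoidAlgebra.of K (FreeMonoid σ) (FreeMonoid.ofList w)

variable (K : Type) [Field K]

section Defs

variable {σ : Type} {A : Type} [Ring A] [Algebra K A]

/-- `a` is a monomial of `A` (i.e. the image of a word under the presentation `π`). -/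
def IsMono (π : FreeAlg K σ →ₐ[K] A) (a : A) : Prop :=
  ∃ w : List σ, a = π (wrd K w)

/-- `a` is a monomial of `A` of length `D`. -/
def IsMonoLen (π : FreeAlg K σ →ₐ[K] A) (D : ℕ) (a : A) : Prop :=
  ∃ w : List σ, w.length = D ∧ a = π (wrd K w)

/-- `π` presents `A` as a monomial algebra: `π` is onto and its kernel is spanned by the
monomials it contains (equivalently, it is generated as a two-sided ideal by monomials). -/
def MonomialPresentation (π : FreeAlg K σ →ₐ[K] A) : Prop :=
  Function.Surjective π ∧
    ∀ a : FreeAlg K σ, π a = 0 ↔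
      a ∈ Submodule.span K {m : FreeAlg K σ | ∃ w : List σ, m = wrd K w ∧ π (wrd K w) = 0}

/-- Every nonzero monomial of `A` is right prolongable. -/
def RightProlongable (π : FreeAlg K σ →ₐ[K] A) : Prop :=
  ∀ a : A, IsMono K π a → a ≠ 0 → ∃ w : List σ, w ≠ [] ∧ a * π (wrd K w) ≠ 0

/-- A subspace of `A` spanned by monomials. -/
def MonomialSubspace (π : FreeAlg K σ →ₐ[K] A) (L : Submodule K A) : Prop :=
  ∃ S : Set (List σ), L = Submodule.span K ((fun w => π (wrd K w)) '' S)

/-- The standard generating subspace, spanned by `1` together with the generators. -/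
def genV (π : FreeAlg K σ →ₐ[K] A) : Submodule K A :=
  Submodule.span K ({1} ∪ Set.range fun i : σ => π (wrd K [i]))

end Defs

section Amen

/-- `L` is a `(V, ε)`-invariant subspace of `A`, viewed as a right module over itself:
`dim (L·V) < (1+ε) · dim L`. -/
def RInv {A : Type} [Ring A] [Algebra K A] (L V : Submodule K A) (ε : ℝ) : Prop :=
  FiniteDimensional K L ∧ FiniteDimensional K (L * V : Submodule K A) ∧
    (finrank K (L * V : Submodule K A) : ℝ) < (1 + ε) * (finrank K L : ℝ)

/-- `L` is a `(V, ε)`-invariant subspace of `A`, viewed as a left module over itself. -/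
def LInv {A : Type} [Ring A] [Algebra K A] (L V : Submodule K A) (ε : ℝ) : Prop :=
  FiniteDimensional K L ∧ FiniteDimensional K (V * L : Submodule K A) ∧
    (finrank K (V * L : Submodule K A) : ℝ) < (1 + ε) * (finrank K L : ℝ)

/-- `A` is amenable as a right module over itself. -/
def RightSelfAmenable (A : Type) [Ring A] [Algebra K A] : Prop :=
  ∀ V : Submodule K A, FiniteDimensional K V → ∀ ε : ℝ, 0 < ε →
    ∃ L : Submodule K A, RInv K L V ε

/-- `A` is exhaustively amenable as a right module over itself. -/
def RightSelfExhAmenable (A : Type) [Ring A] [Algebra K A] : Prop :=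
  ∀ V : Submodule K A, FiniteDimensional K V → ∀ ε : ℝ, 0 < ε →
    ∀ W : Submodule K A, FiniteDimensional K W →
      ∃ L : Submodule K A, W ≤ L ∧ RInv K L V ε

/-- `A` is exhaustively amenable as a left module over itself. -/
def LeftSelfExhAmenable (A : Type) [Ring A] [Algebra K A] : Prop :=
  ∀ V : Submodule K A, FiniteDimensional K V → ∀ ε : ℝ, 0 < ε →
    ∀ W : Submodule K A, FiniteDimensional K W →
      ∃ L : Submodule K A, W ≤ L ∧ LInv K L V ε

/-- For a right `A`-module `M` (encoded via an `Aᵐᵒᵖ`-action), the subspace `L·V`,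
spanned by `{ℓ·v : ℓ ∈ L, v ∈ V}`. -/
def rLV {A M : Type} [Ring A] [Algebra K A] [AddCommGroup M] [Module K M] [Module Aᵐᵒᵖ M]
    (L : Submodule K M) (V : Submodule K A) : Submodule K M :=
  Submodule.span K {x : M | ∃ l ∈ L, ∃ v ∈ V, x = (op v) • l}

/-- `L` is a `(V, ε)`-invariant subspace of the right `A`-module `M`. -/
def RModInv {A M : Type} [Ring A] [Algebra K A] [AddCommGroup M] [Module K M] [Module Aᵐᵒᵖ M]
    (L : Submodule K M) (V : Submodule K A) (ε : ℝ) : Prop :=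
  FiniteDimensional K L ∧ FiniteDimensional K (rLV K L V) ∧
    (finrank K (rLV K L V) : ℝ) < (1 + ε) * (finrank K L : ℝ)

/-- The right `A`-module `M` is amenable. -/
def RModAmenable (A M : Type) [Ring A] [Algebra K A] [AddCommGroup M] [Module K M]
    [Module Aᵐᵒᵖ M] [IsScalarTower K Aᵐᵒᵖ M] : Prop :=
  ∀ V : Submodule K A, FiniteDimensional K V → ∀ ε : ℝ, 0 < ε →
    ∃ L : Submodule K M, RModInv K L V ε

/-- The right `A`-module `M` is exhaustively amenable. -/
def RModExhAmenable (A M : Type) [Ring A] [Algebra K A] [AddCommGroup M] [Module K M]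
    [Module Aᵐᵒᵖ M] [IsScalarTower K Aᵐᵒᵖ M] : Prop :=
  ∀ V : Submodule K A, FiniteDimensional K V → ∀ ε : ℝ, 0 < ε →
    ∀ W : Submodule K M, FiniteDimensional K W →
      ∃ L : Submodule K M, W ≤ L ∧ RModInv K L V ε

/-- For a left `A`-module `M`, the subspace `V·L`, spanned by `{v·ℓ : ℓ ∈ L, v ∈ V}`. -/
def lVL {A M : Type} [Ring A] [Algebra K A] [AddCommGroup M] [Module K M] [Module A M]
    (L : Submodule K M) (V : Submodule K A) : Submodule K M :=
  Submodule.span K {x : M | ∃ l ∈ L, ∃ v ∈ V, x = v • l}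

/-- `L` is a `(V, ε)`-invariant subspace of the left `A`-module `M`. -/
def LModInv {A M : Type} [Ring A] [Algebra K A] [AddCommGroup M] [Module K M] [Module A M]
    (L : Submodule K M) (V : Submodule K A) (ε : ℝ) : Prop :=
  FiniteDimensional K L ∧ FiniteDimensional K (lVL K L V) ∧
    (finrank K (lVL K L V) : ℝ) < (1 + ε) * (finrank K L : ℝ)

/-- The left `A`-module `M` is exhaustively amenable. -/
def LModExhAmenable (A M : Type) [Ring A] [Algebra K A] [AddCommGroup M] [Module K M]
    [Module A M] [IsScalarTower K A M] : Prop :=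
  ∀ V : Submodule K A, FiniteDimensional K V → ∀ ε : ℝ, 0 < ε →
    ∀ W : Submodule K M, FiniteDimensional K W →
      ∃ L : Submodule K M, W ≤ L ∧ LModInv K L V ε

/-- A Følner sequence for `A` as a right module over itself, with respect to the
generating subspace `V`. -/
def FolnerSeq {A : Type} [Ring A] [Algebra K A] (V : Submodule K A)
    (L : ℕ → Submodule K A) : Prop :=
  Monotone L ∧ (∀ n, FiniteDimensional K (L n)) ∧ (⨆ n, L n) = (⊤ : Submodule K A) ∧
    Tendsto (fun n => (finrank K (L n * V : Submodule K A) : ℝ) / (finrank K (L n) : ℝ))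
      atTop (nhds 1)

/-- The isoperimetric profile of `A` with respect to `V`:
`I(n) = inf {dim((W·V + W)/W) : dim W = n}`. -/
def isoProfile {A : Type} [Ring A] [Algebra K A] (V : Submodule K A) (n : ℕ) : ℕ :=
  sInf {k : ℕ | ∃ W : Submodule K A, FiniteDimensional K W ∧ finrank K W = n ∧
    FiniteDimensional K (W ⊔ W * V : Submodule K A) ∧
    k = finrank K (W ⊔ W * V : Submodule K A) - finrank K W}

end Amen

section Words

variable {σ : Type}

/-- The shift on bi-infinite words. -/
def shiftZ (s : ℤ → σ) : ℤ → σ := fun n => s (n + 1)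

/-- The word `u` occurs in the bi-infinite word `s` at position `k`. -/
def OccursAt (u : List σ) (s : ℤ → σ) (k : ℤ) : Prop :=
  ∀ i : Fin u.length, s (k + (i : ℕ)) = u.get i

/-- `u` is a (finite) factor of the bi-infinite word `s`. -/
def FactorZ (u : List σ) (s : ℤ → σ) : Prop := ∃ k : ℤ, OccursAt u s k

/-- `u` is a factor of the subshift `X`. -/
def FactorOfX (u : List σ) (X : Set (ℤ → σ)) : Prop := ∃ s ∈ X, FactorZ u s

/-- `s` is recurrent: every factor occurs at infinitely many positions. -/
def RecurrentZ (s : ℤ → σ) : Prop :=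
  ∀ u : List σ, FactorZ u s → {k : ℤ | OccursAt u s k}.Infinite

/-- `s` is uniformly recurrent: for every factor `u` there is `N` such that every
factor of `s` of length `N` contains an occurrence of `u`. -/
def UnifRecurrentZ (s : ℤ → σ) : Prop :=
  ∀ u : List σ, FactorZ u s → ∃ N : ℕ, ∀ v : List σ, FactorZ v s → v.length = N → u <:+: v

/-- `X ⊆ σ^ℤ` is a subshift: nonempty, closed and shift-invariant. -/
def IsSubshift [TopologicalSpace σ] (X : Set (ℤ → σ)) : Prop :=
  X.Nonempty ∧ IsClosed X ∧ ∀ s ∈ X, shiftZ s ∈ X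

/-- `X` is a minimal subshift. -/
def IsMinimalSubshift [TopologicalSpace σ] (X : Set (ℤ → σ)) : Prop :=
  IsSubshift X ∧
    ∀ Y : Set (ℤ → σ), Y ⊆ X → IsClosed Y → (∀ s ∈ Y, shiftZ s ∈ Y) → Y = ∅ ∨ Y = X

/-- `X` is a transitive subshift: some element has dense shift-orbit. -/
def IsTransitiveSubshift [TopologicalSpace σ] (X : Set (ℤ → σ)) : Prop :=
  IsSubshift X ∧ ∃ s ∈ X, closure {t : ℤ → σ | ∃ n : ℤ, t = fun m => s (m + n)} = X

/-- The word `u` occurs in the right-infinite word `s` at position `k`. -/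
def OccursAtN (u : List σ) (s : ℕ → σ) (k : ℕ) : Prop :=
  ∀ i : Fin u.length, s (k + (i : ℕ)) = u.get i

/-- `u` is a factor of the right-infinite word `s`. -/
def FactorN (u : List σ) (s : ℕ → σ) : Prop := ∃ k : ℕ, OccursAtN u s k

/-- A right-infinite word is uniformly recurrent. -/
def UnifRecurrentN (s : ℕ → σ) : Prop :=
  ∀ u : List σ, FactorN u s → ∃ N : ℕ, ∀ v : List σ, FactorN v s → v.length = N → u <:+: v

end Words

end Paper

namespace Paper

open Module

/-- The set `S = ⋃_{k ≥ 1} {10^k · n + k − 1 : n ≥ 1}`. -/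
def Sset : Set ℕ := {m : ℕ | ∃ k, 1 ≤ k ∧ ∃ n, 1 ≤ n ∧ m = 10 ^ k * n + k - 1}

/-- A word over the alphabet `{x_1, x_2, x_3}` (encoded as `{0, 1, 2} = Fin 3`) is *good*
if it occurs as a factor of some right-infinite word `x_{ε_1} x_{ε_2} x_{ε_3} ⋯` with
`ε_i = 1` (i.e. `ε i = 0` in our encoding) if and only if `i ∈ S`. -/
def goodWord (w : List (Fin 3)) : Prop :=
  ∃ ε : ℕ → Fin 3, (∀ i : ℕ, 1 ≤ i → (ε i = 0 ↔ i ∈ Sset)) ∧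
    ∃ t : ℕ, ∀ j : Fin w.length, w.get j = ε (t + (j : ℕ) + 1)

section Stmt16Aux

/-- A run of `Kk` consecutive elements of `Sset` starting at a multiple of `10^Kk`. -/
lemma runS_mem (Kk v j : ℕ) (hv : 10 ^ Kk ∣ v) (hge : 10 ^ Kk ≤ v)
    (hj : j < Kk) : v + j ∈ Sset := by
  have hd : 10 ^ (j + 1) ∣ v := dvd_trans (pow_dvd_pow 10 (by omega)) hv
  have hle : 10 ^ (j + 1) ≤ v :=
    le_trans (Nat.pow_le_pow_right (by norm_num) (by omega)) hge
  have hpos : 0 < 10 ^ (j + 1) := Nat.pow_pos (by norm_num)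
  refine ⟨j + 1, by omega, v / 10 ^ (j + 1), ?_, ?_⟩
  · exact (Nat.one_le_div_iff hpos).mpr hle
  · rw [Nat.mul_div_cancel' hd]; omega

/-- Key arithmetic lemma: there is no long chain of non-`Sset` positions with
consecutive gaps at most `2 * D`. -/
lemma arithS (D : ℕ) : ∃ m : ℕ, 1 ≤ m ∧ ∀ p : ℕ → ℕ,
    (∀ i, i + 1 < m → p i < p (i + 1) ∧ p (i + 1) ≤ p i + 2 * D) →
    (∀ i, i < m → p i ∉ Sset) → False := by
  classical
  set Kk := 2 * D + 1 with hKk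
  set T := 10 ^ Kk with hT
  have hTpos : 0 < T := Nat.pow_pos (by norm_num)
  refine ⟨T + Kk + 2, by omega, ?_⟩
  set m := T + Kk + 2 with hm
  intro p hchain hout
  have grow : ∀ i, i < m → p 0 + i ≤ p i := by
    intro i
    induction i with
    | zero => intro _; omega
    | succ n ih =>
      intro hi
      have h1 := (hchain n (by omega)).1
      have h2 := ih (by omega)
      omega
  obtain ⟨v, hvd, hp0v, hvle, hvge⟩ :
      ∃ v, T ∣ v ∧ p 0 < v ∧ v ≤ p 0 + T ∧ T ≤ v := by
    have h1 := Nat.div_add_mod (p 0) T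
    have h2 := Nat.mod_lt (p 0) hTpos
    have h3 : T * (p 0 / T + 1) = T * (p 0 / T) + T := Nat.mul_succ _ _
    refine ⟨T * (p 0 / T + 1), dvd_mul_right _ _, ?_, ?_, ?_⟩ <;>
      · set X := T * (p 0 / T) with hX
        set Y := T * (p 0 / T + 1) with hY
        set r := p 0 % T with hr
        omega
  have hlast : v + Kk < p (m - 1) := by
    have := grow (m - 1) (by omega)
    omega
  have hcross : ∀ n, n < m → p n < v ∨ ∃ i, i + 1 ≤ n ∧ p i < v ∧ v ≤ p (i + 1) := by
    intro n
    induction n with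
    | zero => intro _; exact Or.inl hp0v
    | succ k ih =>
      intro hk
      by_cases hpk : p (k + 1) < v
      · exact Or.inl hpk
      · rcases ih (by omega) with h | ⟨i, hi, h1, h2⟩
        · exact Or.inr ⟨k, le_rfl, h, by omega⟩
        · exact Or.inr ⟨i, by omega, h1, h2⟩
  obtain ⟨i0, hi0, hPi0', hnext⟩ :
      ∃ i, i + 1 ≤ m - 1 ∧ p i < v ∧ v ≤ p (i + 1) := by
    rcases hcross (m - 1) (by omega) with h | h
    · omega
    · exact h
  have hchain0 := hchain i0 (by omega)
  have hub : p (i0 + 1) < v + Kk := by omega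
  obtain ⟨j, hj, hje⟩ : ∃ j, j < Kk ∧ p (i0 + 1) = v + j :=
    ⟨p (i0 + 1) - v, by omega, by omega⟩
  exact hout (i0 + 1) (by omega) (hje ▸ runS_mem Kk v j hvd hvge hj)

/-- From a concatenation of blocks, each of length at most `D` and containing a
nonzero letter, extract a chain of nonzero positions with small gaps. -/
lemma extractPos (D : ℕ) :
    ∀ bs : List (List (Fin 3)),
      (∀ b ∈ bs, b.length ≤ D ∧ ∃ x ∈ b, x ≠ 0) →
      ∀ (ε : ℕ → Fin 3) (c : ℕ),
        (∀ (j : ℕ) (h : j < bs.flatten.length), bs.flatten.get ⟨j, h⟩ = ε (c + j)) →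
        ∃ ps : List ℕ, ps.length = bs.length ∧
          ps.Chain' (fun a b => a < b ∧ b ≤ a + 2 * D) ∧
          (∀ q ∈ ps, c ≤ q ∧ ε q ≠ 0) ∧
          (∀ q ∈ ps.head?, q < c + D) := by
  intro bs
  induction bs with
  | nil =>
    intro _ ε c _
    exact ⟨[], rfl, List.isChain_nil, by simp, by simp⟩
  | cons b bs ih =>
    intro hb ε c hocc
    obtain ⟨hbD, x, hxmem, hx⟩ := hb b (List.mem_cons_self)
    obtain ⟨o, ho⟩ := List.mem_iff_get.mp hxmem
    have hfl : (b :: bs).flatten = b ++ bs.flatten := by simp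
    have hεo : ε (c + (o : ℕ)) ≠ 0 := by
      have hlt : (o : ℕ) < (b :: bs).flatten.length := by
        rw [hfl, List.length_append]; omega
      have h1 := hocc (o : ℕ) hlt
      have h2 : (b :: bs).flatten.get ⟨(o : ℕ), hlt⟩ = b.get o := by
        simp only [List.get_eq_getElem, List.flatten_cons]
        rw [List.getElem_append_left o.isLt]
      rw [h2, ho] at h1
      rw [← h1]; exact hx
    have hocc' : ∀ (j : ℕ) (h : j < bs.flatten.length),
        bs.flatten.get ⟨j, h⟩ = ε ((c + b.length) + j) := by
      intro j h
      have hlt : b.length + j < (b :: bs).flatten.length := by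
        rw [hfl, List.length_append]; omega
      have h1 := hocc (b.length + j) hlt
      have h2 : (b :: bs).flatten.get ⟨b.length + j, hlt⟩ = bs.flatten.get ⟨j, h⟩ := by
        simp only [List.get_eq_getElem, List.flatten_cons]
        rw [List.getElem_append_right (by omega)]
        congr 1
        omega
      rw [h2] at h1
      rw [h1]; congr 1; omega
    obtain ⟨ps, hpl, hpc, hpm, hph⟩ :=
      ih (fun b' hb' => hb b' (List.mem_cons_of_mem _ hb')) ε (c + b.length) hocc'
    have ho2 : (o : ℕ) < b.length := o.isLt
    refine ⟨(c + (o : ℕ)) :: ps, by simp [hpl], ?_, ?_, ?_⟩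
    · refine List.isChain_cons.mpr ?_
      refine ⟨?_, hpc⟩
      intro q hq
      have h3 := hph q hq
      have h4 := (hpm q (List.mem_of_mem_head? hq)).1
      constructor <;> omega
    · intro q hq
      rcases List.mem_cons.mp hq with rfl | hq'
      · exact ⟨Nat.le_add_right _ _, hεo⟩
      · obtain ⟨h5, h6⟩ := hpm q hq'
        exact ⟨by omega, h6⟩
    · intro q hq
      simp only [List.head?_cons, Option.mem_def, Option.some_inj] at hq
      omega

/-- The monomials span the free algebra. -/
lemma span_wrd_top (K : Type) [Field K] (σ : Type) :
    Submodule.span K (Set.range fun w : List σ => wrd K w) = ⊤ := by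
  rw [eq_top_iff]
  rintro f -
  induction f using MonoidAlgebra.induction_on with
  | of g =>
    exact Submodule.subset_span ⟨FreeMonoid.toList g, by simp [wrd]⟩
  | add f g hf hg => exact Submodule.add_mem _ hf hg
  | smul r f hf => exact Submodule.smul_mem _ _ hf

end Stmt16Aux

/-- local nilpotence of the ideal `⟨x_2, x_3⟩`. With
`A = K⟨x_1, x_2, x_3⟩ / I` as above, the two-sided ideal of `A` generated by `x_2` and
`x_3` is locally nilpotent: every finitely generated non-unital `K`-subalgebra `B`
contained in this ideal is nilpotent, i.e. there is `m ≥ 1` such that every product of `m`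
elements of `B` is zero. -/
theorem stmt16 (K : Type) [Field K]
    (A : Type) [Ring A] [Algebra K A] (π : FreeAlg K (Fin 3) →ₐ[K] A)
    (hsurj : Function.Surjective π)
    (hker : ∀ a : FreeAlg K (Fin 3), π a = 0 ↔
      a ∈ Submodule.span K
        {m : FreeAlg K (Fin 3) | ∃ w : List (Fin 3), m = wrd K w ∧ ¬ goodWord w})
    (J : Submodule K A)
    (hJ : J = Submodule.span K {x : A | ∃ a b g : A,
      (g = π (wrd K [1]) ∨ g = π (wrd K [2])) ∧ x = a * g * b}) :
    ∀ B : NonUnitalSubalgebra K A,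
      (∃ G : Finset A, B = NonUnitalAlgebra.adjoin K (G : Set A)) →
      (B : Set A) ⊆ (J : Set A) →
      ∃ m : ℕ, 1 ≤ m ∧ ∀ l : List A, l.length = m → (∀ g ∈ l, g ∈ B) → l.prod = 0 := by
  classical
  intro B hBfg hBJ
  obtain ⟨G, hG⟩ := hBfg
  have wrdmul : ∀ u v : List (Fin 3), wrd K (u ++ v) = wrd K u * wrd K v := by
    intro u v
    unfold wrd
    rw [FreeMonoid.ofList_append, map_mul]
  have πmul : ∀ u v : List (Fin 3), π (wrd K (u ++ v)) = π (wrd K u) * π (wrd K v) := by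
    intro u v; rw [wrdmul, map_mul]
  -- every element of `A` is in the span of monomials
  have htop : ∀ a : A, a ∈ Submodule.span K (Set.range fun w : List (Fin 3) => π (wrd K w)) := by
    intro a
    obtain ⟨f, rfl⟩ := hsurj a
    have hf : f ∈ Submodule.span K (Set.range fun w : List (Fin 3) => wrd K w) := by
      rw [span_wrd_top]; exact Submodule.mem_top
    have h1 : π.toLinearMap f ∈
        Submodule.map π.toLinearMap (Submodule.span K (Set.range fun w : List (Fin 3) => wrd K w)) :=
      Submodule.mem_map_of_mem hf
    rw [Submodule.map_span] at h1
    have him : π.toLinearMap '' (Set.range fun w : List (Fin 3) => wrd K w) ⊆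
        Set.range fun w : List (Fin 3) => π (wrd K w) := by
      rintro y ⟨z, ⟨w, rfl⟩, rfl⟩
      exact ⟨w, rfl⟩
    exact Submodule.span_mono him h1
  -- the subspaces M D spanned by monomials of length ≤ D containing a nonzero letter
  set M : ℕ → Submodule K A := fun D =>
    Submodule.span K ((fun w => π (wrd K w)) '' {b : List (Fin 3) | b.length ≤ D ∧ ∃ x ∈ b, x ≠ 0})
    with hM
  have hMmono : Monotone M := by
    intro a b hab
    apply Submodule.span_mono
    apply Set.image_mono
    rintro w ⟨h1, h2⟩
    exact ⟨h1.trans hab, h2⟩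
  have hQmem : ∀ c : Fin 3, c ≠ 0 → ∀ u v : List (Fin 3),
      π (wrd K u) * π (wrd K [c]) * π (wrd K v) ∈ ⨆ D, M D := by
    intro c hc u v
    have he : π (wrd K u) * π (wrd K [c]) * π (wrd K v) = π (wrd K (u ++ [c] ++ v)) := by
      rw [πmul (u ++ [c]) v, πmul u [c]]
    rw [he]
    refine le_iSup M (u ++ [c] ++ v).length ?_
    exact Submodule.subset_span ⟨u ++ [c] ++ v, ⟨le_rfl, c, by simp, hc⟩, rfl⟩
  have hgg : ∀ gg : A, (gg = π (wrd K [1]) ∨ gg = π (wrd K [2])) →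
      ∀ a b : A, a * gg * b ∈ ⨆ D, M D := by
    intro gg hgcases a b
    obtain ⟨c, hc, rfl⟩ : ∃ c : Fin 3, c ≠ 0 ∧ gg = π (wrd K [c]) := by
      rcases hgcases with h | h
      · exact ⟨1, by decide, h⟩
      · exact ⟨2, by decide, h⟩
    have hstep : ∀ v : List (Fin 3), ∀ a : A,
        a * π (wrd K [c]) * π (wrd K v) ∈ ⨆ D, M D := by
      intro v a
      have ha := htop a
      induction ha using Submodule.span_induction with
      | mem x hx =>
        obtain ⟨u, rfl⟩ := hx
        exact hQmem c hc u v
      | zero => simpa using Submodule.zero_mem (⨆ D, M D)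
      | add x y hx hy ihx ihy =>
        simpa [add_mul] using Submodule.add_mem _ ihx ihy
      | smul r x hx ih =>
        simpa [smul_mul_assoc] using Submodule.smul_mem _ r ih
    have hb := htop b
    induction hb using Submodule.span_induction with
    | mem x hx =>
      obtain ⟨v, rfl⟩ := hx
      exact hstep v a
    | zero => simpa using Submodule.zero_mem (⨆ D, M D)
    | add x y hx hy ihx ihy =>
      simpa [mul_add] using Submodule.add_mem _ ihx ihy
    | smul r x hx ih =>
      simpa [mul_smul_comm] using Submodule.smul_mem _ r ih
  have hJle : ∀ x ∈ J, x ∈ ⨆ D, M D := by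
    intro x hx
    rw [hJ] at hx
    refine Submodule.span_le.mpr ?_ hx
    rintro y ⟨a, b, g, hgc, rfl⟩
    exact hgg g hgc a b
  -- choose a uniform bound D0 for the generators
  have hGmem : ∀ g ∈ G, ∃ Dg : ℕ, g ∈ M Dg := by
    intro g hg
    have hgB : g ∈ B := by
      rw [hG]; exact NonUnitalAlgebra.subset_adjoin K (by simpa using hg)
    have hgJ : g ∈ J := hBJ hgB
    exact (Submodule.mem_iSup_of_directed M hMmono.directed_le).mp (hJle g hgJ)
  obtain ⟨D0, hD0⟩ : ∃ D0 : ℕ, ∀ g ∈ G, g ∈ M D0 := by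
    choose Df hDf using hGmem
    refine ⟨G.sup fun g => if h : g ∈ G then Df g h else 0, ?_⟩
    intro g hg
    have hle : Df g hg ≤ G.sup fun g => if h : g ∈ G then Df g h else 0 := by
      have h1 := Finset.le_sup (f := fun g => if h : g ∈ G then Df g h else 0) hg
      simpa only [dif_pos hg] using h1
    exact hMmono hle (hDf g hg)
  -- N m : span of concatenations of at least m blocks
  set Wst : ℕ → Set (List (Fin 3)) := fun m =>
    {w : List (Fin 3) | ∃ bs : List (List (Fin 3)), m ≤ bs.length ∧
      (∀ b ∈ bs, b.length ≤ D0 ∧ ∃ x ∈ b, x ≠ 0) ∧ w = bs.flatten} with hWst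
  set N : ℕ → Submodule K A := fun m => Submodule.span K ((fun w => π (wrd K w)) '' Wst m)
    with hN
  have hNanti : ∀ a b : ℕ, a ≤ b → N b ≤ N a := by
    intro a b hab
    apply Submodule.span_mono
    apply Set.image_mono
    rintro w ⟨bs, hlen, hblk, rfl⟩
    exact ⟨bs, hab.trans hlen, hblk, rfl⟩
  have hNmul : ∀ (x y : A) (a b : ℕ), x ∈ N a → y ∈ N b → x * y ∈ N (a + b) := by
    intro x y a b hx hy
    have hmm := Submodule.mul_mem_mul hx hy
    rw [hN] at hmm
    rw [Submodule.span_mul_span] at hmm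
    refine Submodule.span_le.mpr ?_ hmm
    rintro z hz
    rw [Set.mem_mul] at hz
    obtain ⟨x', hx', y', hy', rfl⟩ := hz
    obtain ⟨u, ⟨bs1, h1l, h1b, rfl⟩, rfl⟩ := hx'
    obtain ⟨v, ⟨bs2, h2l, h2b, rfl⟩, rfl⟩ := hy'
    refine Submodule.subset_span ⟨(bs1 ++ bs2).flatten, ⟨bs1 ++ bs2, ?_, ?_, rfl⟩, ?_⟩
    · rw [List.length_append]; omega
    · intro bb hbb
      rcases List.mem_append.mp hbb with h | h
      exacts [h1b bb h, h2b bb h]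
    · show π (wrd K ((bs1 ++ bs2).flatten)) = π (wrd K bs1.flatten) * π (wrd K bs2.flatten)
      rw [List.flatten_append]
      exact πmul _ _
  have hM0N : M D0 ≤ N 1 := by
    apply Submodule.span_mono
    apply Set.image_mono
    rintro b ⟨h1, h2⟩
    exact ⟨[b], by simp, by simpa using ⟨h1, h2⟩, by simp⟩
  -- B is contained in N 1
  have hBC : ∀ g ∈ B, g ∈ N 1 := by
    intro g hg
    rw [hG] at hg
    have hsub : (G : Set A) ⊆ ((N 1).toNonUnitalSubalgebra
        (fun x y hx hy => hNanti 1 2 (by omega) (hNmul x y 1 1 hx hy)) : Set A) := by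
      intro g' hg'
      exact hM0N (hD0 g' (by simpa using hg'))
    exact NonUnitalAlgebra.adjoin_le hsub hg
  have hprod : ∀ l : List A, l ≠ [] → (∀ g ∈ l, g ∈ N 1) → l.prod ∈ N l.length := by
    intro l
    induction l with
    | nil => intro h; exact absurd rfl h
    | cons g t ih =>
      intro _ hmem
      rcases eq_or_ne t [] with rfl | ht
      · simpa using hmem g (by simp)
      · have h1 : g ∈ N 1 := hmem g (by simp)
        have h2 : t.prod ∈ N t.length := ih ht fun x hx => hmem x (by simp [hx])
        have h3 := hNmul g t.prod 1 t.length h1 h2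
        rw [List.prod_cons]
        have h4 : 1 + t.length = (g :: t).length := by simp [Nat.add_comm]
        rwa [h4] at h3
  -- the combinatorial bound
  obtain ⟨m, hm1, harith⟩ := arithS D0
  refine ⟨m, hm1, ?_⟩
  intro l hl hlB
  have hlne : l ≠ [] := by
    rintro rfl
    simp only [List.length_nil] at hl
    omega
  have hmem : l.prod ∈ N m := by
    rw [← hl]
    exact hprod l hlne fun g hg => hBC g (hlB g hg)
  have hNbot : N m ≤ ⊥ := by
    rw [hN]
    refine Submodule.span_le.mpr ?_
    rintro x ⟨w, ⟨bs, hlen, hblk, rfl⟩, rfl⟩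
    have hbadg : ¬ goodWord bs.flatten := by
      rintro ⟨ε, hε, t, hocc⟩
      have hocc' : ∀ (j : ℕ) (h : j < bs.flatten.length),
          bs.flatten.get ⟨j, h⟩ = ε ((t + 1) + j) := by
        intro j h
        have h1 := hocc ⟨j, h⟩
        rw [h1]
        congr 1
        show t + j + 1 = t + 1 + j
        omega
      obtain ⟨ps, hpl, hpc, hpm, -⟩ := extractPos D0 bs hblk ε (t + 1) hocc'
      refine harith (fun i => ps.getD i 0) ?_ ?_
      · intro i hi
        show ps.getD i 0 < ps.getD (i + 1) 0 ∧ ps.getD (i + 1) 0 ≤ ps.getD i 0 + 2 * D0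
        have hi1 : i + 1 < ps.length := by omega
        have hch := List.isChain_iff_getElem.mp hpc i (by omega)
        have e1 : ps.getD i 0 = ps.get ⟨i, by omega⟩ := List.getD_eq_getElem ps 0 (by omega)
        have e2 : ps.getD (i + 1) 0 = ps.get ⟨i + 1, by omega⟩ := List.getD_eq_getElem ps 0 (by omega)
        rw [e1, e2]
        exact hch
      · intro i hi
        show ps.getD i 0 ∉ Sset
        have hilt : i < ps.length := by omega
        have hq : ps.getD i 0 ∈ ps := by
          have e1 : ps.getD i 0 = ps.get ⟨i, hilt⟩ := List.getD_eq_getElem ps 0 hilt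
          rw [e1]
          exact List.get_mem ps ⟨i, hilt⟩
        obtain ⟨hge, hne⟩ := hpm _ hq
        intro hS
        exact hne ((hε _ (by omega)).mpr hS)
    have hz : π (wrd K bs.flatten) = 0 :=
      (hker _).mpr (Submodule.subset_span ⟨bs.flatten, rfl, hbadg⟩)
    simp [hz]
  have hfin := hNbot hmem
  simpa using hfin

end Paper
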